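/- Let F = ⟨f_1,…,f_r⟩ be a flip sequence transforming T_0 into T_r through intermediate triangulations T_0, T_1, …, T_r. Suppose that for some indices i < j and some h with i ≤ h < j, the diagonal f_i^→ is a neighbor of f_j^← in the triangulation T_h. Then there is a directed path from f_i to f_j in the DAG D_F. -/
import Mathlib


open Finset

/-- Two vertices of the convex `m`-gon are adjacent in the cyclic order. -/
def PolyAdj (m : ℕ) (a b : Fin m) : Prop :=
  (a.val + 1) % m = b.val ∨ (b.val + 1) % m = a.val

/-- `e` is a diagonal of the convex `m`-gon: an unordered pair of distinct,
non-adjacent vertices. -/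
def IsDiagonal (m : ℕ) (e : Finset (Fin m)) : Prop :=
  ∃ a b : Fin m, a ≠ b ∧ ¬ PolyAdj m a b ∧ e = {a, b}

/-- The cyclic distance from `a` to `x`, going forwards in the cyclic order. -/
def cycDist (m : ℕ) (a x : Fin m) : ℕ := (x.val + m - a.val) % m

/-- `x` lies strictly between `a` and `b` in the cyclic order. -/
def CycBtw (m : ℕ) (a x b : Fin m) : Prop :=
  0 < cycDist m a x ∧ cycDist m a x < cycDist m a b

/-- Two chords cross: their endpoints strictly interleave in the cyclic order. -/
def Cross (m : ℕ) (e₁ e₂ : Finset (Fin m)) : Prop :=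
  ∃ a b c d : Fin m, e₁ = {a, b} ∧ e₂ = {c, d} ∧ CycBtw m a c b ∧ CycBtw m b d a

/-- A triangulation of the convex `m`-gon: a maximal set of pairwise
non-crossing diagonals. -/
structure Triangulation (m : ℕ) where
  diagonals : Finset (Finset (Fin m))
  isDiagonal : ∀ e ∈ diagonals, IsDiagonal m e
  noncross : ∀ e₁ ∈ diagonals, ∀ e₂ ∈ diagonals, ¬ Cross m e₁ e₂
  maximal : ∀ e, IsDiagonal m e → (∀ e' ∈ diagonals, ¬ Cross m e e') → e ∈ diagonals

/-- `e` is a side in the triangulation `T`: either an edge of the polygon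
(between cyclically adjacent vertices) or a diagonal of `T`. -/
def IsSide (m : ℕ) (T : Triangulation m) (e : Finset (Fin m)) : Prop :=
  (∃ a b : Fin m, PolyAdj m a b ∧ e = {a, b}) ∨ e ∈ T.diagonals

/-- `t` is a triangle of the triangulation `T`: three distinct vertices each
pair of which forms a side of `T`. -/
def IsTriangle (m : ℕ) (T : Triangulation m) (t : Finset (Fin m)) : Prop :=
  ∃ a b c : Fin m, a ≠ b ∧ a ≠ c ∧ b ≠ c ∧ t = {a, b, c} ∧
    IsSide m T {a, b} ∧ IsSide m T {a, c} ∧ IsSide m T {b, c}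

/-- Two diagonals of `T` are neighbors if they both belong to `T` and lie on a
common triangle of `T`; they are independent otherwise. -/
def Neighbor (m : ℕ) (T : Triangulation m) (e₁ e₂ : Finset (Fin m)) : Prop :=
  e₁ ∈ T.diagonals ∧ e₂ ∈ T.diagonals ∧
    ∃ t, IsTriangle m T t ∧ e₁ ⊆ t ∧ e₂ ⊆ t

/-- `T'` is obtained from `T` by flipping the diagonal `e`, which removes `e`
and creates the new diagonal `e'` (necessarily the opposite diagonal of the
quadrilateral formed by the two triangles of `T` containing `e`, since `T'` is
again a triangulation). -/
def IsFlip (m : ℕ) (T T' : Triangulation m) (e e' : Finset (Fin m)) : Prop :=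
  e ∈ T.diagonals ∧ e' ∉ T.diagonals ∧
    T'.diagonals = insert e' (T.diagonals.erase e)

/-- `Ts 0, Ts 1, …, Ts r` is a sequence of triangulations in which `Ts (i+1)`
is obtained from `Ts i` by performing the flip `F i`, which removes the
diagonal `(F i).1` and creates the diagonal `(F i).2`. -/
def IsFlipSeq (m r : ℕ) (F : ℕ → Finset (Fin m) × Finset (Fin m))
    (Ts : ℕ → Triangulation m) : Prop :=
  ∀ i < r, IsFlip m (Ts i) (Ts (i + 1)) (F i).1 (F i).2

/-- The flip distance between two triangulations: the minimum length of a flip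
sequence transforming one into the other. -/
noncomputable def FlipDist (m : ℕ) (T T' : Triangulation m) : ℕ :=
  sInf {r | ∃ F Ts, IsFlipSeq m r F Ts ∧ Ts 0 = T ∧ Ts r = T'}

/-- `e` is a free-diagonal of `T` with respect to `Tfinal`: flipping `e` in `T`
creates a diagonal belonging to `Tfinal`. -/
def FreeDiagonal (m : ℕ) (T Tfinal : Triangulation m) (e : Finset (Fin m)) : Prop :=
  ∃ T' e', IsFlip m T T' e e' ∧ e' ∈ Tfinal.diagonals

/-- Arc of the DAG `D_F` associated to the flip sequence `F` with triangulation
sequence `Ts`: there is an arc from flip `i` to flip `j` when `i < j` and the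
diagonal created by flip `i` is a neighbor of the diagonal removed by flip `j`
in the triangulation `Ts j` in which flip `j` is performed. -/
def Arc (m r : ℕ) (F : ℕ → Finset (Fin m) × Finset (Fin m))
    (Ts : ℕ → Triangulation m) (i j : ℕ) : Prop :=
  i < j ∧ j < r ∧ Neighbor m (Ts j) (F i).2 (F j).1

section Aux

variable {m : ℕ}

lemma cycDist_spec (a b : Fin m) :
    (a.val ≤ b.val ∧ cycDist m a b = b.val - a.val) ∨
    (b.val < a.val ∧ cycDist m a b = b.val + m - a.val) := by
  have ha := a.isLt; have hb := b.isLt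
  unfold cycDist
  rcases le_or_gt a.val b.val with h | h
  · left
    refine ⟨h, ?_⟩
    have h1 : b.val + m - a.val = (b.val - a.val) + m := by omega
    rw [h1, Nat.add_mod_right, Nat.mod_eq_of_lt (by omega)]
  · right
    refine ⟨h, ?_⟩
    rw [Nat.mod_eq_of_lt (by omega)]

lemma succ_mod_spec (a : Fin m) :
    (a.val + 1 < m ∧ (a.val + 1) % m = a.val + 1) ∨
    (a.val + 1 = m ∧ (a.val + 1) % m = 0) := by
  have ha := a.isLt
  rcases lt_or_ge (a.val + 1) m with h | h
  · exact Or.inl ⟨h, Nat.mod_eq_of_lt h⟩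
  · have : a.val + 1 = m := by omega
    exact Or.inr ⟨this, by rw [this, Nat.mod_self]⟩

lemma cycDist_self (a : Fin m) : cycDist m a a = 0 := by
  unfold cycDist
  rw [show a.val + m - a.val = m by omega, Nat.mod_self]

lemma cycDist_transfer (a x y : Fin m) :
    (cycDist m a x ≤ cycDist m a y ∧ cycDist m x y = cycDist m a y - cycDist m a x) ∨
    (cycDist m a y < cycDist m a x ∧
      cycDist m x y = cycDist m a y + m - cycDist m a x) := by
  have ha := a.isLt; have hx := x.isLt; have hy := y.isLt
  have s1 := cycDist_spec a x
  have s2 := cycDist_spec a y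
  have s3 := cycDist_spec x y
  omega

lemma vtx_pos (a : Fin m) : 0 < m := lt_of_le_of_lt (Nat.zero_le _) a.isLt

def vtx (a : Fin m) (t : ℕ) : Fin m := ⟨(a.val + t) % m, Nat.mod_lt _ (vtx_pos a)⟩

lemma vtx_spec (a : Fin m) (t : ℕ) (ht : t < m) : cycDist m a (vtx a t) = t := by
  have ha := a.isLt
  have hv : (vtx a t).val = (a.val + t) % m := rfl
  have hmod : (a.val + t) % m = a.val + t ∨
      ((a.val + t) % m = a.val + t - m ∧ m ≤ a.val + t) := by
    rcases lt_or_ge (a.val + t) m with h | h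
    · exact Or.inl (Nat.mod_eq_of_lt h)
    · exact Or.inr ⟨by rw [Nat.mod_eq_sub_mod h, Nat.mod_eq_of_lt (by omega)], h⟩
  have := cycDist_spec a (vtx a t)
  omega

lemma vtx_cycDist (a x : Fin m) : vtx a (cycDist m a x) = x := by
  apply Fin.ext
  have h : a.val + cycDist m a x = x.val ∨ a.val + cycDist m a x = x.val + m := by
    have := cycDist_spec a x; omega
  show (a.val + cycDist m a x) % m = x.val
  rcases h with h | h
  · rw [h, Nat.mod_eq_of_lt x.isLt]
  · rw [h, Nat.add_mod_right, Nat.mod_eq_of_lt x.isLt]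

lemma cycDist_inj {a x y : Fin m} (h : cycDist m a x = cycDist m a y) : x = y := by
  rw [← vtx_cycDist a x, ← vtx_cycDist a y, h]

lemma cycDist_lt (a b : Fin m) : cycDist m a b < m := by
  have := cycDist_spec a b; have := a.isLt; have := b.isLt; omega

lemma cycDist_eq_zero {a b : Fin m} (h : cycDist m a b = 0) : a = b :=
  cycDist_inj (a := a) (by rw [h, cycDist_self])

lemma polyAdj_iff (hm : 3 ≤ m) (a b : Fin m) :
    PolyAdj m a b ↔ cycDist m a b = 1 ∨ cycDist m b a = 1 := by
  have s1 := cycDist_spec a b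
  have s2 := cycDist_spec b a
  have := a.isLt; have := b.isLt
  have e1 := succ_mod_spec a
  have e2 := succ_mod_spec b
  unfold PolyAdj
  rcases e1 with ⟨h1, h2⟩ | ⟨h1, h2⟩ <;> rcases e2 with ⟨h3, h4⟩ | ⟨h3, h4⟩ <;>
    rw [h2, h4] <;> omega

lemma polyAdj_symm {a b : Fin m} (h : PolyAdj m a b) : PolyAdj m b a := h.symm

lemma pair_eq {α : Type*} [DecidableEq α] {a b c d : α} (h : ({a,b}:Finset α) = {c,d}) :
    (a = c ∧ b = d) ∨ (a = d ∧ b = c) := by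
  have ha : a ∈ ({c,d}:Finset α) := by rw [← h]; simp
  have hb : b ∈ ({c,d}:Finset α) := by rw [← h]; simp
  have hc : c ∈ ({a,b}:Finset α) := by rw [h]; simp
  have hd : d ∈ ({a,b}:Finset α) := by rw [h]; simp
  simp only [Finset.mem_insert, Finset.mem_singleton] at ha hb hc hd
  aesop

lemma pair_subset_triple {α : Type*} [DecidableEq α] {x y A B C : α} (hxy : x ≠ y)
    (h : ({x,y}:Finset α) ⊆ {A,B,C}) :
    ({x,y}:Finset α) = {A,B} ∨ ({x,y}:Finset α) = {A,C} ∨ ({x,y}:Finset α) = {B,C} := by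
  have hx : x ∈ ({A,B,C}:Finset α) := h (by simp)
  have hy : y ∈ ({A,B,C}:Finset α) := h (by simp)
  simp only [Finset.mem_insert, Finset.mem_singleton] at hx hy
  rcases hx with rfl | rfl | rfl <;> rcases hy with rfl | rfl | rfl <;>
    simp_all [Finset.pair_comm]
end Aux

section Geo

variable {m : ℕ}

lemma cycBtw_ne_left {a x b : Fin m} (h : CycBtw m a x b) : x ≠ a := by
  intro he
  obtain ⟨h1, h2⟩ := h
  rw [he, cycDist_self] at h1
  exact Nat.lt_irrefl 0 h1

lemma cycBtw_ne_right {a x b : Fin m} (h : CycBtw m a x b) : x ≠ b := by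
  intro he
  obtain ⟨h1, h2⟩ := h
  rw [he] at h2
  exact Nat.lt_irrefl _ h2

lemma cycBtw_ends_ne {a x b : Fin m} (h : CycBtw m a x b) : a ≠ b := by
  intro he
  obtain ⟨h1, h2⟩ := h
  rw [← he, cycDist_self] at h2
  omega

lemma not_cross_left_adj (hm : 3 ≤ m) {a b : Fin m} (hadj : PolyAdj m a b)
    (e : Finset (Fin m)) : ¬ Cross m {a,b} e := by
  rintro ⟨a₁, b₁, c₁, d₁, h1, h2, hb1, hb2⟩
  obtain ⟨hb11, hb12⟩ := hb1
  obtain ⟨hb21, hb22⟩ := hb2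
  rcases pair_eq h1 with ⟨rfl, rfl⟩ | ⟨rfl, rfl⟩ <;>
    rcases (polyAdj_iff hm _ _).mp hadj with h | h <;> omega

lemma not_cross_right_adj (hm : 3 ≤ m) {c d : Fin m} (hadj : PolyAdj m c d)
    (e : Finset (Fin m)) : ¬ Cross m e {c,d} := by
  rintro ⟨a₁, b₁, c₁, d₁, h1, h2, hb1, hb2⟩
  obtain ⟨hb11, hb12⟩ := hb1
  obtain ⟨hb21, hb22⟩ := hb2
  have t1 := cycDist_transfer a₁ c₁ d₁
  have t2 := cycDist_transfer a₁ d₁ c₁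
  have t3 := cycDist_transfer a₁ b₁ d₁
  have t4 := cycDist_transfer a₁ b₁ a₁
  have h0 := cycDist_self a₁
  have l1 := cycDist_lt a₁ c₁
  have l2 := cycDist_lt a₁ d₁
  have l3 := cycDist_lt a₁ b₁
  rcases pair_eq h2 with ⟨rfl, rfl⟩ | ⟨rfl, rfl⟩ <;>
    rcases (polyAdj_iff hm _ _).mp hadj with h | h <;> omega

lemma sides_not_cross (hm : 3 ≤ m) (T : Triangulation m) {s₁ s₂ : Finset (Fin m)}
    (h1 : IsSide m T s₁) (h2 : IsSide m T s₂) : ¬ Cross m s₁ s₂ := by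
  rcases h1 with ⟨a, b, hadj, rfl⟩ | h1
  · exact not_cross_left_adj hm hadj _
  rcases h2 with ⟨c, d, hadj, rfl⟩ | h2
  · exact not_cross_right_adj hm hadj _
  exact T.noncross _ h1 _ h2

lemma side_diag_of_cross (hm : 3 ≤ m) (T : Triangulation m) {z x : Finset (Fin m)}
    (hs : IsSide m T z) (hc : Cross m x z) : z ∈ T.diagonals := by
  rcases hs with ⟨c, d, hadj, rfl⟩ | h
  · exact absurd hc (not_cross_right_adj hm hadj x)
  · exact h

lemma exists_cross_of_notMem (T : Triangulation m) {e : Finset (Fin m)}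
    (hd : IsDiagonal m e) (hne : e ∉ T.diagonals) : ∃ z ∈ T.diagonals, Cross m e z := by
  by_contra hc
  push_neg at hc
  exact hne (T.maximal e hd hc)

lemma flip_cross {T T' : Triangulation m} {e e' : Finset (Fin m)}
    (hf : IsFlip m T T' e e') : Cross m e' e := by
  have he' : e' ∈ T'.diagonals := by rw [hf.2.2]; exact Finset.mem_insert_self _ _
  obtain ⟨z, hz, hcr⟩ := exists_cross_of_notMem T (T'.isDiagonal e' he') hf.2.1
  by_cases hze : z = e
  · exact hze ▸ hcr
  · exfalso
    have hzT' : z ∈ T'.diagonals := by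
      rw [hf.2.2]; exact Finset.mem_insert_of_mem (Finset.mem_erase.mpr ⟨hze, hz⟩)
    exact T'.noncross e' he' z hzT' hcr

lemma flip_symm {T T' : Triangulation m} {e e' : Finset (Fin m)}
    (hf : IsFlip m T T' e e') : IsFlip m T' T e' e := by
  obtain ⟨h1, h2, h3⟩ := hf
  have he'mem : e' ∈ T'.diagonals := by rw [h3]; exact Finset.mem_insert_self _ _
  refine ⟨he'mem, ?_, ?_⟩
  · intro hmem
    rw [h3] at hmem
    rcases Finset.mem_insert.mp hmem with h | h
    · exact h2 (h ▸ h1)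
    · exact (Finset.mem_erase.mp h).1 rfl
  · have hnm : e' ∉ T.diagonals.erase e := fun hx => h2 (Finset.mem_of_mem_erase hx)
    rw [h3, Finset.erase_insert hnm, Finset.insert_erase h1]

lemma side_persist {T T' : Triangulation m} {e e' s : Finset (Fin m)}
    (hf : IsFlip m T T' e e') (hs : IsSide m T s) (hne : s ≠ e) : IsSide m T' s := by
  rcases hs with h | h
  · exact Or.inl h
  · exact Or.inr (by rw [hf.2.2]; exact Finset.mem_insert_of_mem (Finset.mem_erase.mpr ⟨hne, h⟩))

lemma interleave_conv {x u y v : Fin m} (h1 : CycBtw m x u y) (h2 : CycBtw m y v x) :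
    CycBtw m u y v ∧ CycBtw m v x u := by
  obtain ⟨a1, a2⟩ := h1
  obtain ⟨b1, b2⟩ := h2
  have t1 := cycDist_transfer x y v
  have t2 := cycDist_transfer x y x
  have t3 := cycDist_transfer x u y
  have t4 := cycDist_transfer x u v
  have t5 := cycDist_transfer x v x
  have t6 := cycDist_transfer x v u
  have h0 := cycDist_self x
  have l1 := cycDist_lt x u
  have l2 := cycDist_lt x y
  have l3 := cycDist_lt x v
  exact ⟨⟨by omega, by omega⟩, ⟨by omega, by omega⟩⟩

lemma cycBtw_total {a x b : Fin m} (hxa : x ≠ a) (hxb : x ≠ b) (hab : a ≠ b) :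
    CycBtw m a x b ∨ CycBtw m b x a := by
  have t1 := cycDist_transfer a b x
  have t2 := cycDist_transfer a b a
  have h0 := cycDist_self a
  have l1 := cycDist_lt a x
  have l2 := cycDist_lt a b
  have n1 : cycDist m a x ≠ 0 := fun h => hxa (cycDist_eq_zero h).symm
  have n2 : cycDist m a x ≠ cycDist m a b := fun h => hxb (cycDist_inj h)
  have n3 : cycDist m a b ≠ 0 := fun h => hab (cycDist_eq_zero h)
  rcases Nat.lt_or_ge (cycDist m a x) (cycDist m a b) with h | h
  · exact Or.inl ⟨by omega, by omega⟩
  · exact Or.inr ⟨by omega, by omega⟩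

end Geo

section Apex

variable {m : ℕ}

lemma diag_of_pair {T : Triangulation m} {a b : Fin m}
    (hab : ({a,b} : Finset (Fin m)) ∈ T.diagonals) : a ≠ b ∧ ¬ PolyAdj m a b := by
  obtain ⟨a', b', hne', hadj', hrep⟩ := T.isDiagonal _ hab
  rcases pair_eq hrep with ⟨rfl, rfl⟩ | ⟨rfl, rfl⟩
  · exact ⟨hne', hadj'⟩
  · exact ⟨hne'.symm, fun h => hadj' (polyAdj_symm h)⟩

lemma apex (hm : 3 ≤ m) (T : Triangulation m) {a b : Fin m}
    (hab : ({a,b} : Finset (Fin m)) ∈ T.diagonals) :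
    ∃ c, CycBtw m a c b ∧ IsSide m T {a,c} ∧ IsSide m T {c,b} := by
  classical
  obtain ⟨hne, hadj⟩ := diag_of_pair hab
  have hvne : a.val ≠ b.val := fun h => hne (Fin.ext h)
  have sab := cycDist_spec a b
  have sba := cycDist_spec b a
  have hia := a.isLt; have hib := b.isLt
  have hD2 : 2 ≤ cycDist m a b ∧ cycDist m a b + 2 ≤ m := by
    rw [polyAdj_iff hm] at hadj
    push_neg at hadj
    omega
  obtain ⟨t0, hQt0, ht0ge, ht0le, ht0max⟩ :
      ∃ t0, IsSide m T {a, vtx a t0} ∧ 1 ≤ t0 ∧ t0 ≤ cycDist m a b - 1 ∧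
        ∀ k, t0 < k → k ≤ cycDist m a b - 1 → ¬ IsSide m T {a, vtx a k} := by
    have hQ1 : IsSide m T {a, vtx a 1} := Or.inl ⟨a, vtx a 1, Or.inl rfl, rfl⟩
    refine ⟨Nat.findGreatest (fun t => IsSide m T {a, vtx a t}) (cycDist m a b - 1),
      ?_, ?_, ?_, ?_⟩
    · exact Nat.findGreatest_spec (P := fun t => IsSide m T {a, vtx a t})
        (show 1 ≤ cycDist m a b - 1 by omega) hQ1
    · exact Nat.le_findGreatest (P := fun t => IsSide m T {a, vtx a t})
        (show 1 ≤ cycDist m a b - 1 by omega) hQ1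
    · exact Nat.findGreatest_le _
    · exact fun k h1 h2 =>
        Nat.findGreatest_is_greatest (P := fun t => IsSide m T {a, vtx a t}) h1 h2
  obtain ⟨c, hcdef⟩ : ∃ c, c = vtx a t0 := ⟨_, rfl⟩
  have hπc : cycDist m a c = t0 := by rw [hcdef]; exact vtx_spec a t0 (by omega)
  have hcb : CycBtw m a c b := by unfold CycBtw; omega
  rw [← hcdef] at hQt0
  refine ⟨c, hcb, hQt0, ?_⟩
  by_cases hlast : t0 = cycDist m a b - 1
  · left
    refine ⟨c, b, ?_, rfl⟩
    rw [polyAdj_iff hm]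
    have tcb := cycDist_transfer a c b
    omega
  · -- t0 < cycDist m a b - 1 : use maximality
    have hcbne : c ≠ b := fun h => by rw [h] at hπc; omega
    have tcb := cycDist_transfer a c b
    have tbc := cycDist_transfer a b c
    right
    apply T.maximal
    · refine ⟨c, b, hcbne, ?_, rfl⟩
      rw [polyAdj_iff hm]
      omega
    · rintro e'' he'' ⟨a₁, b₁, c₁, d₁, h1, h2, hb1, hb2⟩
      -- normalize endpoints: x strictly in (c,b), y strictly in (b,c)
      have key : ∃ x y, e'' = {x, y} ∧ CycBtw m c x b ∧ CycBtw m b y c := by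
        rcases pair_eq h1 with ⟨rfl, rfl⟩ | ⟨rfl, rfl⟩
        · exact ⟨c₁, d₁, h2, hb1, hb2⟩
        · exact ⟨d₁, c₁, by rw [h2, Finset.pair_comm], hb2, hb1⟩
      obtain ⟨x, y, hexy, hx, hy⟩ := key
      obtain ⟨hx1, hx2⟩ := hx
      obtain ⟨hy1, hy2⟩ := hy
      have tcx := cycDist_transfer a c x
      have tby := cycDist_transfer a b y
      have tba := cycDist_transfer a b a
      have tca := cycDist_transfer a c a
      have h0 := cycDist_self a
      have lx := cycDist_lt a x
      have ly := cycDist_lt a y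
      -- coordinates: t0 < πx < cycDist a b ; πy > cycDist a b ∨ πy < t0
      have hπx : t0 < cycDist m a x ∧ cycDist m a x < cycDist m a b := by omega
      have hπy : cycDist m a b < cycDist m a y ∨ cycDist m a y < t0 := by omega
      rcases hπy with hπy | hπy
      · -- e'' crosses {a,b}
        have w1 : CycBtw m a x b := by unfold CycBtw; omega
        have w2 : CycBtw m b y a := by unfold CycBtw; omega
        exact sides_not_cross hm T (Or.inr hab) (Or.inr he'')
          ⟨a, b, x, y, rfl, hexy, w1, w2⟩
      · by_cases hy0 : cycDist m a y = 0
        · -- y = a : contradicts maximality of t0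
          have hya : y = a := (cycDist_eq_zero hy0).symm
          refine ht0max (cycDist m a x) (by omega) (by omega) ?_
          refine Or.inr ?_
          have hxx : ({a, vtx a (cycDist m a x)} : Finset (Fin m)) = e'' := by
            rw [vtx_cycDist, hexy, hya, Finset.pair_comm]
          rw [hxx]
          exact he''
        · -- 0 < πy < t0 : e'' crosses {a,c}
          have w1 : CycBtw m a y c := by unfold CycBtw; omega
          have w2 : CycBtw m c x a := by unfold CycBtw; omega
          exact sides_not_cross hm T hQt0 (Or.inr he'')
            ⟨a, c, y, x, rfl, by rw [hexy, Finset.pair_comm], w1, w2⟩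

lemma diag_rep (T : Triangulation m) {e : Finset (Fin m)} (he : e ∈ T.diagonals) :
    ∃ a b : Fin m, a ≠ b ∧ ¬ PolyAdj m a b ∧ e = {a, b} := T.isDiagonal e he

lemma diag_self_neighbor (hm : 3 ≤ m) (T : Triangulation m) {e : Finset (Fin m)}
    (he : e ∈ T.diagonals) : Neighbor m T e e := by
  obtain ⟨a, b, hne, hadj, rfl⟩ := diag_rep T he
  obtain ⟨c, hc, s1, s2⟩ := apex hm T he
  refine ⟨he, he, {a, b, c}, ⟨a, b, c, hne, (cycBtw_ne_left hc).symm,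
    (cycBtw_ne_right hc).symm, rfl, Or.inr he, s1, by rw [Finset.pair_comm]; exact s2⟩,
    ?_, ?_⟩ <;>
  · intro z hz
    simp only [Finset.mem_insert, Finset.mem_singleton] at hz ⊢
    tauto

end Apex

section FlipStruct

variable {m : ℕ}

lemma apex_unique (hm : 3 ≤ m) (T : Triangulation m) {A B C X : Fin m}
    (hC : CycBtw m A C B) (hX : CycBtw m A X B)
    (s1 : IsSide m T {A,C}) (s2 : IsSide m T {C,B})
    (s3 : IsSide m T {A,X}) (s4 : IsSide m T {X,B}) : X = C := by
  obtain ⟨hC1, hC2⟩ := hC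
  obtain ⟨hX1, hX2⟩ := hX
  by_contra hne
  have hπne : cycDist m A X ≠ cycDist m A C := fun h => hne (cycDist_inj h)
  have t1 := cycDist_transfer A C B
  have t2 := cycDist_transfer A C A
  have t3 := cycDist_transfer A X B
  have t4 := cycDist_transfer A X A
  have h0 := cycDist_self A
  have l1 := cycDist_lt A B
  have l2 := cycDist_lt A C
  have l3 := cycDist_lt A X
  rcases Nat.lt_or_ge (cycDist m A X) (cycDist m A C) with hlt | hge
  · have w1 : CycBtw m A X C := by unfold CycBtw; omega
    have w2 : CycBtw m C B A := by unfold CycBtw; omega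
    exact sides_not_cross hm T s1 s4 ⟨A, C, X, B, rfl, rfl, w1, w2⟩
  · have w1 : CycBtw m A C X := by unfold CycBtw; omega
    have w2 : CycBtw m X B A := by unfold CycBtw; omega
    exact sides_not_cross hm T s3 s2 ⟨A, X, C, B, rfl, rfl, w1, w2⟩

lemma endpoint_eq_apex (hm : 3 ≤ m) (T' : Triangulation m) {A B C x y : Fin m}
    (he' : ({x,y} : Finset (Fin m)) ∈ T'.diagonals)
    (hx : CycBtw m A x B) (hy : CycBtw m B y A) (hC : CycBtw m A C B)
    (s1 : IsSide m T' {A,C}) (s2 : IsSide m T' {C,B}) : x = C := by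
  obtain ⟨hx1, hx2⟩ := hx
  obtain ⟨hy1, hy2⟩ := hy
  obtain ⟨hC1, hC2⟩ := hC
  by_contra hne
  have hπne : cycDist m A x ≠ cycDist m A C := fun h => hne (cycDist_inj h)
  have t1 := cycDist_transfer A B y
  have t2 := cycDist_transfer A B A
  have t3 := cycDist_transfer A x C
  have t4 := cycDist_transfer A x y
  have t5 := cycDist_transfer A y A
  have t6 := cycDist_transfer A y x
  have t7 := cycDist_transfer A y C
  have t8 := cycDist_transfer A x B
  have h0 := cycDist_self A
  have l1 := cycDist_lt A B
  have l2 := cycDist_lt A C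
  have l3 := cycDist_lt A x
  have l4 := cycDist_lt A y
  rcases Nat.lt_or_ge (cycDist m A x) (cycDist m A C) with hlt | hge
  · have w1 : CycBtw m x C y := by unfold CycBtw; omega
    have w2 : CycBtw m y A x := by unfold CycBtw; omega
    exact sides_not_cross hm T' (Or.inr he') s1
      ⟨x, y, C, A, rfl, Finset.pair_comm A C, w1, w2⟩
  · have w1 : CycBtw m x B y := by unfold CycBtw; omega
    have w2 : CycBtw m y C x := by unfold CycBtw; omega
    exact sides_not_cross hm T' (Or.inr he') s2
      ⟨x, y, B, C, rfl, Finset.pair_comm C B, w1, w2⟩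

lemma flip_struct (hm : 3 ≤ m) {T T' : Triangulation m} {e e' : Finset (Fin m)}
    (hf : IsFlip m T T' e e') {A B : Fin m} (he : e = {A,B}) :
    ∃ C U, CycBtw m A C B ∧ CycBtw m B U A ∧ e' = {C,U} ∧
      IsSide m T {A,C} ∧ IsSide m T {C,B} ∧ IsSide m T {B,U} ∧ IsSide m T {U,A} := by
  have heT : e ∈ T.diagonals := hf.1
  have hABd : ({A,B} : Finset (Fin m)) ∈ T.diagonals := he ▸ heT
  have hBAd : ({B,A} : Finset (Fin m)) ∈ T.diagonals := by
    rw [Finset.pair_comm]; exact hABd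
  obtain ⟨hAB, hadjAB⟩ := diag_of_pair hABd
  obtain ⟨C, hcC, sAC, sCB⟩ := apex hm T hABd
  obtain ⟨U, hcU, sBU, sUA⟩ := apex hm T hBAd
  have he'T' : e' ∈ T'.diagonals := by rw [hf.2.2]; exact Finset.mem_insert_self _ _
  obtain ⟨a₁, b₁, c₁, d₁, H1, H2, hb1, hb2⟩ := flip_cross hf
  have key : ∃ x y, e' = {x,y} ∧ CycBtw m A x B ∧ CycBtw m B y A := by
    rcases pair_eq (show ({A,B} : Finset (Fin m)) = {c₁,d₁} by rw [← he, H2])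
      with ⟨h1, h2⟩ | ⟨h1, h2⟩
    · rw [← h1] at hb1
      rw [← h2] at hb2
      exact ⟨b₁, a₁, by rw [H1, Finset.pair_comm], (interleave_conv hb1 hb2).1,
        (interleave_conv hb1 hb2).2⟩
    · rw [← h2] at hb1
      rw [← h1] at hb2
      exact ⟨a₁, b₁, H1, (interleave_conv hb1 hb2).2, (interleave_conv hb1 hb2).1⟩
  obtain ⟨x, y, hexy, hxAB, hyBA⟩ := key
  have hCB_ne : C ≠ B := cycBtw_ne_right hcC
  have hCA_ne : C ≠ A := cycBtw_ne_left hcC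
  have hUA_ne : U ≠ A := cycBtw_ne_right hcU
  have hUB_ne : U ≠ B := cycBtw_ne_left hcU
  have nAC : ({A,C} : Finset (Fin m)) ≠ e := by
    rw [he]; intro hq
    rcases pair_eq hq with ⟨_, h⟩ | ⟨h, _⟩
    · exact hCB_ne h
    · exact hAB h
  have nCB : ({C,B} : Finset (Fin m)) ≠ e := by
    rw [he]; intro hq
    rcases pair_eq hq with ⟨h, _⟩ | ⟨_, h⟩
    · exact hCA_ne h
    · exact hAB h.symm
  have nBU : ({B,U} : Finset (Fin m)) ≠ e := by
    rw [he]; intro hq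
    rcases pair_eq hq with ⟨h, h'⟩ | ⟨h, h'⟩
    · exact hAB h.symm
    · exact hUA_ne h'
  have nUA : ({U,A} : Finset (Fin m)) ≠ e := by
    rw [he]; intro hq
    rcases pair_eq hq with ⟨h, h'⟩ | ⟨h, h'⟩
    · exact hUA_ne h
    · exact hUB_ne h
  have sAC' := side_persist hf sAC nAC
  have sCB' := side_persist hf sCB nCB
  have sBU' := side_persist hf sBU nBU
  have sUA' := side_persist hf sUA nUA
  have hxC : x = C := endpoint_eq_apex hm T' (hexy ▸ he'T') hxAB hyBA hcC sAC' sCB'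
  have hyU : y = U := by
    have hyx : ({y,x} : Finset (Fin m)) ∈ T'.diagonals := by
      rw [Finset.pair_comm y x, ← hexy]; exact he'T'
    exact endpoint_eq_apex hm T' hyx hyBA hxAB hcU sBU' sUA'
  exact ⟨C, U, hcC, hcU, by rw [hexy, hxC, hyU], sAC, sCB, sBU, sUA⟩

end FlipStruct

section ClaimH

variable {m : ℕ}

lemma subset_triple_12 {A B C : Fin m} : ({A,B} : Finset (Fin m)) ⊆ {A,B,C} := by
  intro z hz; simp only [Finset.mem_insert, Finset.mem_singleton] at hz ⊢; tauto

lemma subset_triple_13 {A B C : Fin m} : ({A,C} : Finset (Fin m)) ⊆ {A,B,C} := by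
  intro z hz; simp only [Finset.mem_insert, Finset.mem_singleton] at hz ⊢; tauto

lemma subset_triple_23 {A B C : Fin m} : ({B,C} : Finset (Fin m)) ⊆ {A,B,C} := by
  intro z hz; simp only [Finset.mem_insert, Finset.mem_singleton] at hz ⊢; tauto

lemma subset_triple_21 {A B C : Fin m} : ({B,A} : Finset (Fin m)) ⊆ {A,B,C} := by
  intro z hz; simp only [Finset.mem_insert, Finset.mem_singleton] at hz ⊢; tauto

lemma subset_triple_31 {A B C : Fin m} : ({C,A} : Finset (Fin m)) ⊆ {A,B,C} := by
  intro z hz; simp only [Finset.mem_insert, Finset.mem_singleton] at hz ⊢; tauto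

lemma subset_triple_32 {A B C : Fin m} : ({C,B} : Finset (Fin m)) ⊆ {A,B,C} := by
  intro z hz; simp only [Finset.mem_insert, Finset.mem_singleton] at hz ⊢; tauto

set_option maxHeartbeats 1000000 in
lemma claimH (hm : 3 ≤ m) {T T' : Triangulation m} {w y g : Finset (Fin m)}
    (hf : IsFlip m T T' w y) (hg : IsDiagonal m g) (hgT : g ∉ T.diagonals)
    (hcr : Cross m g y) :
    ∃ z ∈ T.diagonals, Cross m g z ∧ (z = w ∨ Neighbor m T z w) := by
  have hwT : w ∈ T.diagonals := hf.1
  obtain ⟨A, B, hABne, hABadj, hwAB⟩ := T.isDiagonal w hwT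
  obtain ⟨C, U, hcC, hcU, hyCU, sAC, sCB, sBU, sUA⟩ := flip_struct hm hf hwAB
  have hCA := cycBtw_ne_left hcC
  have hCB := cycBtw_ne_right hcC
  have hUB := cycBtw_ne_left hcU
  have hUA := cycBtw_ne_right hcU
  have hwABd : ({A,B} : Finset (Fin m)) ∈ T.diagonals := hwAB ▸ hwT
  have tri1 : IsTriangle m T {A,B,C} :=
    ⟨A, B, C, hABne, hCA.symm, hCB.symm, rfl, Or.inr hwABd, sAC,
      by rw [Finset.pair_comm B C]; exact sCB⟩
  have tri2 : IsTriangle m T {A,B,U} :=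
    ⟨A, B, U, hABne, hUA.symm, hUB.symm, rfl, Or.inr hwABd,
      by rw [Finset.pair_comm A U]; exact sUA, sBU⟩
  have hw3 : w ⊆ ({A,B,C} : Finset (Fin m)) := by rw [hwAB]; exact subset_triple_12
  have hw3' : w ⊆ ({A,B,U} : Finset (Fin m)) := by rw [hwAB]; exact subset_triple_12
  obtain ⟨a₁, b₁, c₁, d₁, Hg, Hy, hb1, hb2⟩ := hcr
  have key : ∃ p s, g = {p,s} ∧ CycBtw m p C s ∧ CycBtw m s U p := by
    rcases pair_eq (show ({C,U} : Finset (Fin m)) = {c₁,d₁} by rw [← hyCU, Hy])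
      with ⟨h1, h2⟩ | ⟨h1, h2⟩
    · rw [← h1] at hb1; rw [← h2] at hb2
      exact ⟨a₁, b₁, Hg, hb1, hb2⟩
    · rw [← h2] at hb1; rw [← h1] at hb2
      exact ⟨b₁, a₁, by rw [Hg, Finset.pair_comm], hb2, hb1⟩
  obtain ⟨p, s, hgps, hpCs, hsUp⟩ := key
  obtain ⟨c1, c2⟩ := hcC
  obtain ⟨u1, u2⟩ := hcU
  have e1 := hpCs.1
  have e2 := hpCs.2
  have e3 := hsUp.1
  have e4 := hsUp.2
  have t_BU := cycDist_transfer A B U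
  have t_BA := cycDist_transfer A B A
  have t_pC := cycDist_transfer A p C
  have t_ps := cycDist_transfer A p s
  have t_sU := cycDist_transfer A s U
  have t_sp := cycDist_transfer A s p
  have h0 := cycDist_self A
  have l_p := cycDist_lt A p
  have l_s := cycDist_lt A s
  have l_C := cycDist_lt A C
  have l_U := cycDist_lt A U
  have l_B := cycDist_lt A B
  -- coordinates relative to A
  have hπU : cycDist m A B < cycDist m A U := by omega
  have coordS : cycDist m A C < cycDist m A s ∧ cycDist m A s < cycDist m A U := by omega
  have coordP : cycDist m A U < cycDist m A p ∨ cycDist m A p < cycDist m A C := by omega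
  have hπs3 : cycDist m A s = cycDist m A B ∨ cycDist m A s < cycDist m A B ∨
      cycDist m A B < cycDist m A s := by omega
  have hπp3 : cycDist m A p = 0 ∨ cycDist m A U < cycDist m A p ∨
      (0 < cycDist m A p ∧ cycDist m A p < cycDist m A C) := by omega
  rcases hπp3 with hπp | hπp | hπp
  · -- p = A
    rcases hπs3 with hπs | hπs | hπs
    · -- s = B : g = w, contradiction
      have hpA : p = A := (cycDist_eq_zero hπp).symm
      have hsB : s = B := cycDist_inj hπs
      exact absurd (by rw [hgps, hpA, hsB, ← hwAB]; exact hwT) hgT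
    · -- s in (C,B) : z = {C,B}
      have t_sB := cycDist_transfer A s B
      have w2 : CycBtw m s B p := by unfold CycBtw; omega
      have hcross : Cross m g {C,B} := ⟨p, s, C, B, hgps, rfl, hpCs, w2⟩
      have hzmem := side_diag_of_cross hm T sCB hcross
      exact ⟨{C,B}, hzmem, hcross,
        Or.inr ⟨hzmem, hwT, {A,B,C}, tri1, subset_triple_32, hw3⟩⟩
    · -- s in (B,U) : z = {B,U}
      have t_pB := cycDist_transfer A p B
      have w1 : CycBtw m p B s := by unfold CycBtw; omega
      have hcross : Cross m g {B,U} := ⟨p, s, B, U, hgps, rfl, w1, hsUp⟩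
      have hzmem := side_diag_of_cross hm T sBU hcross
      exact ⟨{B,U}, hzmem, hcross,
        Or.inr ⟨hzmem, hwT, {A,B,U}, tri2, subset_triple_23, hw3'⟩⟩
  · -- p in (U, m)
    rcases hπs3 with hπs | hπs | hπs
    · -- s = B : z = {U,A}
      have t_pA := cycDist_transfer A p A
      have w1 : CycBtw m p A s := by unfold CycBtw; omega
      have hcross : Cross m g {U,A} :=
        ⟨p, s, A, U, hgps, Finset.pair_comm U A, w1, hsUp⟩
      have hzmem := side_diag_of_cross hm T sUA hcross
      exact ⟨{U,A}, hzmem, hcross,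
        Or.inr ⟨hzmem, hwT, {A,B,U}, tri2, subset_triple_31, hw3'⟩⟩
    · -- s in (C,B) : z = w
      have t_pA := cycDist_transfer A p A
      have t_sB := cycDist_transfer A s B
      have w1 : CycBtw m p A s := by unfold CycBtw; omega
      have w2 : CycBtw m s B p := by unfold CycBtw; omega
      exact ⟨w, hwT, ⟨p, s, A, B, hgps, hwAB, w1, w2⟩, Or.inl rfl⟩
    · -- s in (B,U) : z = {B,U}
      have t_pB := cycDist_transfer A p B
      have w1 : CycBtw m p B s := by unfold CycBtw; omega
      have hcross : Cross m g {B,U} := ⟨p, s, B, U, hgps, rfl, w1, hsUp⟩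
      have hzmem := side_diag_of_cross hm T sBU hcross
      exact ⟨{B,U}, hzmem, hcross,
        Or.inr ⟨hzmem, hwT, {A,B,U}, tri2, subset_triple_23, hw3'⟩⟩
  · -- p in (0, C)
    rcases hπs3 with hπs | hπs | hπs
    · -- s = B : z = {A,C}
      have t_sA := cycDist_transfer A s A
      have w2 : CycBtw m s A p := by unfold CycBtw; omega
      have hcross : Cross m g {A,C} :=
        ⟨p, s, C, A, hgps, Finset.pair_comm A C, hpCs, w2⟩
      have hzmem := side_diag_of_cross hm T sAC hcross
      exact ⟨{A,C}, hzmem, hcross,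
        Or.inr ⟨hzmem, hwT, {A,B,C}, tri1, subset_triple_13, hw3⟩⟩
    · -- s in (C,B) : z = {A,C}
      have t_sA := cycDist_transfer A s A
      have w2 : CycBtw m s A p := by unfold CycBtw; omega
      have hcross : Cross m g {A,C} :=
        ⟨p, s, C, A, hgps, Finset.pair_comm A C, hpCs, w2⟩
      have hzmem := side_diag_of_cross hm T sAC hcross
      exact ⟨{A,C}, hzmem, hcross,
        Or.inr ⟨hzmem, hwT, {A,B,C}, tri1, subset_triple_13, hw3⟩⟩
    · -- s in (B,U) : z = w
      have t_pB := cycDist_transfer A p B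
      have t_sA := cycDist_transfer A s A
      have w1 : CycBtw m p B s := by unfold CycBtw; omega
      have w2 : CycBtw m s A p := by unfold CycBtw; omega
      exact ⟨w, hwT, ⟨p, s, B, A, hgps, by rw [hwAB, Finset.pair_comm], w1, w2⟩,
        Or.inl rfl⟩

end ClaimH

section Dynamics

variable {m : ℕ}

lemma flip_mem_keep {T T' : Triangulation m} {e e' z : Finset (Fin m)}
    (hf : IsFlip m T T' e e') (hz : z ∈ T.diagonals) (hne : z ≠ e) : z ∈ T'.diagonals := by
  rw [hf.2.2]; exact Finset.mem_insert_of_mem (Finset.mem_erase.mpr ⟨hne, hz⟩)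

lemma flip_mem_new {T T' : Triangulation m} {e e' : Finset (Fin m)}
    (hf : IsFlip m T T' e e') : e' ∈ T'.diagonals := by
  rw [hf.2.2]; exact Finset.mem_insert_self _ _

lemma flip_notMem_removed {T T' : Triangulation m} {e e' : Finset (Fin m)}
    (hf : IsFlip m T T' e e') : e ∉ T'.diagonals := by
  rw [hf.2.2]
  intro hmem
  rcases Finset.mem_insert.mp hmem with h | h
  · exact hf.2.1 (h ▸ hf.1)
  · exact (Finset.mem_erase.mp h).1 rfl

lemma inserted_eq {T T' : Triangulation m} {e e' z : Finset (Fin m)}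
    (hf : IsFlip m T T' e e') (hz' : z ∈ T'.diagonals) (hz : z ∉ T.diagonals) : z = e' := by
  rw [hf.2.2] at hz'
  rcases Finset.mem_insert.mp hz' with h | h
  · exact h
  · exact absurd (Finset.mem_of_mem_erase h) hz

lemma cycBtw_opp_ne {a b c u : Fin m} (h1 : CycBtw m a c b) (h2 : CycBtw m b u a) : c ≠ u := by
  obtain ⟨x1, x2⟩ := h1
  obtain ⟨y1, y2⟩ := h2
  have t1 := cycDist_transfer a b u
  have t2 := cycDist_transfer a b a
  have h0 := cycDist_self a
  have l1 := cycDist_lt a b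
  have l2 := cycDist_lt a c
  have l3 := cycDist_lt a u
  intro he
  have : cycDist m a c = cycDist m a u := by rw [he]
  omega

lemma pair_ne_of_notMem {P Q V W : Fin m} (hV : V ≠ P) (hVQ : V ≠ Q) :
    ({W, V} : Finset (Fin m)) ≠ {P, Q} := by
  intro h
  rcases pair_eq h with ⟨h1, h2⟩ | ⟨h1, h2⟩
  · exact hVQ h2
  · exact hV h2

lemma neighbor_core (hm : 3 ≤ m) {T T' : Triangulation m} {d0 d1 g : Finset (Fin m)}
    {P Q R X : Fin m}
    (hf : IsFlip m T T' d0 d1) (hd0 : d0 = {P, Q})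
    (hPQ : P ≠ Q) (hRP : R ≠ P) (hRQ : R ≠ Q)
    (sPR : IsSide m T {P, R}) (sQR : IsSide m T {Q, R})
    (hgX : g = {X, R}) (hX : X = P ∨ X = Q)
    (hgT : g ∈ T.diagonals) (hgd0 : g ≠ d0) :
    Neighbor m T' d1 g := by
  obtain ⟨C', U', hcC, hcU, hd1, sPC, sCQ, sQU, sUP⟩ := flip_struct hm hf hd0
  have hCU : C' ≠ U' := cycBtw_opp_ne hcC hcU
  have hC'P : C' ≠ P := cycBtw_ne_left hcC
  have hC'Q : C' ≠ Q := cycBtw_ne_right hcC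
  have hU'Q : U' ≠ Q := cycBtw_ne_left hcU
  have hU'P : U' ≠ P := cycBtw_ne_right hcU
  have hgT' : g ∈ T'.diagonals := flip_mem_keep hf hgT hgd0
  have hd1T' : d1 ∈ T'.diagonals := flip_mem_new hf
  have hXR : X ≠ R := by rcases hX with rfl | rfl; exact hRP.symm; exact hRQ.symm
  rcases cycBtw_total hRP hRQ hPQ with hR | hR
  · -- R = C' ; d1 = {R, U'} ; triangle {X, R, U'}
    have hRC : R = C' := apex_unique hm T hcC hR sPC sCQ sPR
      (by rw [Finset.pair_comm]; exact sQR)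
    have hXU : X ≠ U' := by rcases hX with rfl | rfl; exact hU'P.symm; exact hU'Q.symm
    have hRU : R ≠ U' := hRC ▸ hCU
    have sXU : IsSide m T {X, U'} := by
      rcases hX with rfl | rfl
      · rw [Finset.pair_comm]; exact sUP
      · exact sQU
    have sXU' : IsSide m T' {X, U'} := side_persist hf sXU
      (by rw [hd0]; exact pair_ne_of_notMem hU'P hU'Q)
    have hd1RU : d1 = ({R, U'} : Finset (Fin m)) := by rw [hd1, hRC]
    have tri : IsTriangle m T' {X, R, U'} :=
      ⟨X, R, U', hXR, hXU, hRU, rfl, Or.inr (hgX ▸ hgT'), sXU',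
        Or.inr (hd1RU ▸ hd1T')⟩
    exact ⟨hd1T', hgT', {X, R, U'}, tri, by rw [hd1RU]; exact subset_triple_23,
      by rw [hgX]; exact subset_triple_12⟩
  · -- R = U' ; d1 = {C', R} ; triangle {X, R, C'}
    have hRU : R = U' := apex_unique hm T hcU hR sQU sUP sQR
      (by rw [Finset.pair_comm]; exact sPR)
    have hXC : X ≠ C' := by rcases hX with rfl | rfl; exact hC'P.symm; exact hC'Q.symm
    have hRC : R ≠ C' := by rw [hRU]; exact fun h => hCU h.symm
    have sXC : IsSide m T {X, C'} := by
      rcases hX with rfl | rfl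
      · exact sPC
      · rw [Finset.pair_comm]; exact sCQ
    have sXC' : IsSide m T' {X, C'} := side_persist hf sXC
      (by rw [hd0]; exact pair_ne_of_notMem hC'P hC'Q)
    have hd1RC : d1 = ({R, C'} : Finset (Fin m)) := by rw [hd1, hRU, Finset.pair_comm]
    have tri : IsTriangle m T' {X, R, C'} :=
      ⟨X, R, C', hXR, hXC, hRC, rfl, Or.inr (hgX ▸ hgT'), sXC',
        Or.inr (hd1RC ▸ hd1T')⟩
    exact ⟨hd1T', hgT', {X, R, C'}, tri, by rw [hd1RC]; exact subset_triple_23,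
      by rw [hgX]; exact subset_triple_12⟩

end Dynamics

section MainProof

variable {m : ℕ}

lemma neighbor_step (hm : 3 ≤ m) {T T' : Triangulation m} {d0 d1 e g : Finset (Fin m)}
    (hf : IsFlip m T T' d0 d1) (hnb : Neighbor m T e g) (hd0g : d0 ≠ g)
    (hnot : ¬ Neighbor m T' e g) :
    Neighbor m T e d0 ∧ Neighbor m T' d1 g := by
  obtain ⟨he, hg, t, ht, het, hgt⟩ := hnb
  obtain ⟨A, B, C, hab, hac, hbc, htv, sAB, sAC, sBC⟩ := ht
  have htri : IsTriangle m T t := ⟨A, B, C, hab, hac, hbc, htv, sAB, sAC, sBC⟩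
  obtain ⟨x, y, hxy, _, hexy⟩ := T.isDiagonal e he
  obtain ⟨x', y', hxy', _, hgxy⟩ := T.isDiagonal g hg
  have pe : e = {A,B} ∨ e = {A,C} ∨ e = {B,C} := by
    have hsub : ({x,y} : Finset (Fin m)) ⊆ {A,B,C} := by rw [← hexy, ← htv]; exact het
    rw [hexy]; exact pair_subset_triple hxy hsub
  have pg : g = {A,B} ∨ g = {A,C} ∨ g = {B,C} := by
    have hsub : ({x',y'} : Finset (Fin m)) ⊆ {A,B,C} := by rw [← hgxy, ← htv]; exact hgt
    rw [hgxy]; exact pair_subset_triple hxy' hsub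
  have hgd0 : g ≠ d0 := Ne.symm hd0g
  have pd0 : d0 = {A,B} ∨ d0 = {A,C} ∨ d0 = {B,C} := by
    by_contra hcon
    push_neg at hcon
    obtain ⟨n1, n2, n3⟩ := hcon
    apply hnot
    have hed0 : e ≠ d0 := by
      rcases pe with h | h | h
      · exact fun hq => n1 (hq ▸ h)
      · exact fun hq => n2 (hq ▸ h)
      · exact fun hq => n3 (hq ▸ h)
    have tri' : IsTriangle m T' t :=
      ⟨A, B, C, hab, hac, hbc, htv, side_persist hf sAB (fun hq => n1 hq.symm),
        side_persist hf sAC (fun hq => n2 hq.symm),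
        side_persist hf sBC (fun hq => n3 hq.symm)⟩
    exact ⟨flip_mem_keep hf he hed0, flip_mem_keep hf hg hgd0, t, tri', het, hgt⟩
  have hd0T : d0 ∈ T.diagonals := hf.1
  have hd0t : d0 ⊆ t := by
    rcases pd0 with h | h | h <;> rw [h, htv]
    · exact subset_triple_12
    · exact subset_triple_13
    · exact subset_triple_23
  refine ⟨⟨he, hd0T, t, htri, het, hd0t⟩, ?_⟩
  rcases pd0 with h0 | h0 | h0 <;> rcases pg with h1 | h1 | h1
  · exact absurd (h0.trans h1.symm) hd0g
  · exact neighbor_core hm hf h0 hab (Ne.symm hac) (Ne.symm hbc) sAC sBC h1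
      (Or.inl rfl) hg hgd0
  · exact neighbor_core hm hf h0 hab (Ne.symm hac) (Ne.symm hbc) sAC sBC h1
      (Or.inr rfl) hg hgd0
  · exact neighbor_core hm hf h0 hac (Ne.symm hab) hbc sAB
      (by rw [Finset.pair_comm]; exact sBC) h1 (Or.inl rfl) hg hgd0
  · exact absurd (h0.trans h1.symm) hd0g
  · exact neighbor_core hm hf h0 hac (Ne.symm hab) hbc sAB
      (by rw [Finset.pair_comm]; exact sBC)
      (by rw [h1, Finset.pair_comm]) (Or.inr rfl) hg hgd0
  · exact neighbor_core hm hf h0 hbc hab hac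
      (by rw [Finset.pair_comm]; exact sAB)
      (by rw [Finset.pair_comm]; exact sAC)
      (by rw [h1, Finset.pair_comm]) (Or.inl rfl) hg hgd0
  · exact neighbor_core hm hf h0 hbc hab hac
      (by rw [Finset.pair_comm]; exact sAB)
      (by rw [Finset.pair_comm]; exact sAC)
      (by rw [h1, Finset.pair_comm]) (Or.inr rfl) hg hgd0
  · exact absurd (h0.trans h1.symm) hd0g

lemma channel (hm : 3 ≤ m) {r : ℕ} {F : ℕ → Finset (Fin m) × Finset (Fin m)}
    {Ts : ℕ → Triangulation m} (hseq : IsFlipSeq m r F Ts)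
    {a L : ℕ} (hLr : L ≤ r)
    {g : Finset (Fin m)} (hgd : IsDiagonal m g)
    (habs : ∀ l, a < l → l ≤ L → g ∉ (Ts l).diagonals)
    (har : a < r) (hga : (F a).1 = g) :
    ∀ l, a + 1 ≤ l → l ≤ L → ∀ z ∈ (Ts l).diagonals, Cross m g z →
      ∃ b, a ≤ b ∧ b < l ∧ (F b).2 = z ∧ Relation.ReflTransGen (Arc m r F Ts) a b := by
  intro l
  induction l with
  | zero => intro h1; exact absurd h1 (by omega)
  | succ n ih =>
    intro h1 h2 z hz hcr
    by_cases hna : n = a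
    · subst hna
      have hfa := hseq n har
      rw [hfa.2.2] at hz
      rcases Finset.mem_insert.mp hz with h | h
      · exact ⟨n, le_refl n, by omega, h.symm, Relation.ReflTransGen.refl⟩
      · have hzTa : z ∈ (Ts n).diagonals := Finset.mem_of_mem_erase h
        have hgTa : g ∈ (Ts n).diagonals := hga ▸ hfa.1
        exact absurd hcr ((Ts n).noncross g hgTa z hzTa)
    · have hn1 : a + 1 ≤ n := by omega
      have hnr : n < r := by omega
      have hfn := hseq n hnr
      by_cases hzy : z = (F n).2
      · have hcyw : Cross m g (F n).2 := hzy ▸ hcr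
        have hgTn : g ∉ (Ts n).diagonals := habs n (by omega) (by omega)
        obtain ⟨z', hz'T, hcrz', hzw⟩ := claimH hm hfn hgd hgTn hcyw
        obtain ⟨b, hab', hbn, hFb, hpath⟩ := ih hn1 (by omega) z' hz'T hcrz'
        have harc : Arc m r F Ts b n := by
          refine ⟨hbn, hnr, ?_⟩
          rw [hFb]
          rcases hzw with rfl | hnb
          · exact diag_self_neighbor hm (Ts n) hz'T
          · exact hnb
        exact ⟨n, by omega, by omega, hzy.symm, hpath.tail harc⟩
      · have hzTn : z ∈ (Ts n).diagonals := by
          rw [hfn.2.2] at hz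
          rcases Finset.mem_insert.mp hz with h | h
          · exact absurd h hzy
          · exact Finset.mem_of_mem_erase h
        obtain ⟨b, hab', hbn, hFb, hpath⟩ := ih hn1 (by omega) z hzTn hcr
        exact ⟨b, hab', by omega, hFb, hpath⟩

end MainProof


/-- Let `F` be a flip sequence transforming `Ts 0` into `Ts r` (the `i`-th
flip, `0`-indexed, is performed in `Ts i` and yields `Ts (i+1)`). Suppose that
for some flip indices `i < j < r` and some `h` with `i < h ≤ j` (so that
`Ts h` is one of the triangulations containing the diagonal created by flip
`i`, strictly between its creation and flip `j`), the diagonal `(F i).2`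
created by flip `i` is a neighbor of the diagonal `(F j).1` removed by flip
`j` in the triangulation `Ts h`. Then there is a directed path from flip `i`
to flip `j` in the DAG `D_F`. -/
theorem arc_path_of_neighbor (m : ℕ) (hm : 3 ≤ m)
    (r : ℕ) (F : ℕ → Finset (Fin m) × Finset (Fin m)) (Ts : ℕ → Triangulation m)
    (hseq : IsFlipSeq m r F Ts)
    (i j h : ℕ) (hij : i < j) (hjr : j < r) (hih : i < h) (hhj : h ≤ j)
    (hnb : Neighbor m (Ts h) (F i).2 (F j).1) :
    Relation.TransGen (Arc m r F Ts) i j := by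

  classical
  have main : ∀ n, ∀ i h, i < j → i < h → h ≤ j → j - h ≤ n →
      Neighbor m (Ts h) (F i).2 (F j).1 → Relation.TransGen (Arc m r F Ts) i j := by
    intro n
    induction n with
    | zero =>
      intro i h hij hih hhj hn hnb
      have hhje : h = j := by omega
      subst hhje
      exact Relation.TransGen.single ⟨hij, hjr, hnb⟩
    | succ n ih =>
      intro i h hij hih hhj hn hnb
      by_cases hhje : h = j
      · subst hhje
        exact Relation.TransGen.single ⟨hij, hjr, hnb⟩
      have hhj' : h < j := by omega
      have hhr : h < r := by omega
      have hfh := hseq h hhr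
      by_cases hpers : Neighbor m (Ts (h+1)) (F i).2 (F j).1
      · exact ih i (h+1) hij (by omega) (by omega) (by omega) hpers
      by_cases hd0g : (F h).1 = (F j).1
      · -- flip h removes (F j).1
        have harc1 : Arc m r F Ts i h := ⟨hih, hhr, by rw [hd0g]; exact hnb⟩
        have hgd : IsDiagonal m (F j).1 := (Ts j).isDiagonal _ (hseq j hjr).1
        have hgnot1 : (F j).1 ∉ (Ts (h+1)).diagonals := by
          have hx := flip_notMem_removed hfh
          rw [hd0g] at hx
          exact hx
        have hPex : ∃ l, h ≤ l ∧ l < j ∧ (F j).1 ∈ (Ts (l+1)).diagonals :=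
          ⟨j - 1, by omega, by omega,
            by rw [show j - 1 + 1 = j by omega]; exact (hseq j hjr).1⟩
        obtain ⟨hk1, hk2, hk3⟩ := Nat.find_spec hPex
        have hkmin := fun l (hl : l < Nat.find hPex) => Nat.find_min hPex hl
        have hkh : h < Nat.find hPex := by
          rcases Nat.lt_or_ge h (Nat.find hPex) with h' | h'
          · exact h'
          · exfalso
            have hkeq : Nat.find hPex = h := by omega
            rw [hkeq] at hk3
            exact hgnot1 hk3
        have habs : ∀ l, h < l → l ≤ Nat.find hPex → (F j).1 ∉ (Ts l).diagonals := by
          intro l hl1 hl2 hmem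
          have hx := hkmin (l - 1) (by omega)
          push_neg at hx
          exact hx (by omega) (by omega) (by rw [show l - 1 + 1 = l by omega]; exact hmem)
        have hkr : Nat.find hPex < r := by omega
        have hfk := hseq (Nat.find hPex) hkr
        have hgTk : (F j).1 ∉ (Ts (Nat.find hPex)).diagonals :=
          habs (Nat.find hPex) hkh (le_refl _)
        have hq : Cross m (F j).1 (F (Nat.find hPex)).1 := by
          obtain ⟨z, hzT, hcr⟩ := exists_cross_of_notMem (Ts (Nat.find hPex)) hgd hgTk
          by_cases hzq : z = (F (Nat.find hPex)).1
          · exact hzq ▸ hcr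
          · exact absurd hcr
              ((Ts (Nat.find hPex + 1)).noncross _ hk3 z (flip_mem_keep hfk hzT hzq))
        have hinsk : (F (Nat.find hPex)).2 = (F j).1 :=
          (inserted_eq hfk hk3 hgTk).symm
        obtain ⟨b, hb1, hb2, hb3, hb4⟩ := channel hm hseq (by omega : Nat.find hPex ≤ r)
          hgd habs hhr hd0g (Nat.find hPex) (by omega) (le_refl _)
          (F (Nat.find hPex)).1 hfk.1 hq
        have harc2 : Arc m r F Ts b (Nat.find hPex) :=
          ⟨hb2, hkr, by rw [hb3]; exact diag_self_neighbor hm _ hfk.1⟩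
        have harc3 : Arc m r F Ts (Nat.find hPex) j :=
          ⟨by omega, hjr, by rw [hinsk]; exact diag_self_neighbor hm _ (hseq j hjr).1⟩
        exact Relation.TransGen.head harc1 ((Relation.TransGen.tail' hb4 harc2).tail harc3)
      · obtain ⟨hnb1, hnb2⟩ := neighbor_step hm hfh hnb hd0g hpers
        exact Relation.TransGen.head ⟨hih, hhr, hnb1⟩
          (ih h (h+1) hhj' (by omega) (by omega) (by omega) hnb2)
  exact main (j - h) i h hij hih hhj (le_refl _) hnb
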